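/- Every unrestricted Fraïssé class U_C (the free superposition over each arity i of the class of finite L_i-structures all of whose i-element substructures are isomorphic to a member of a fixed isomorphism-closed universal constraint set C_i) is a Fraïssé class with disjoint amalgamation and satisfies SDAP. -/

import Mathlib

/-!  Unrestricted Fraïssé classes `U_C`.  For each arity `i + 1` (for `i : Fin N`),
`Λ i` is the set of (isomorphism types of) `L_{i+1}`-structures on the domain
`Fin (i+1)`, acted on by `Equiv.Perm (Fin (i+1))` (relabeling); a structure on a
finite vertex set assigns to each strictly increasing `(i+1)`-tuple of its
vertices a label in `Λ i`, and `U_C` consists of the structures all of whose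
labels lie in the isomorphism-closed universal constraint set `C i ⊆ Λ i`.
(`U_C` is the free superposition over the arities.)  We show `U_C` is a Fraïssé
class with disjoint amalgamation satisfying SDAP. -/

/-- A finite structure in the free superposition: a labeling of the increasing
tuples of each arity. -/
structure URStr (N : ℕ) (Λ : Fin N → Type) where
  V : Finset ℕ
  lab : ∀ i : Fin N, (Fin (i.1 + 1) → ℕ) → Λ i

variable {N : ℕ} {Λ : Fin N → Type}

/-- `S` belongs to the class `U_C` determined by the universal constraint sets
`C i`: the structure induced on every `(i+1)`-element subset is (isomorphic to)
a member of `C i`. -/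
def InUC (C : ∀ i : Fin N, Set (Λ i)) (S : URStr N Λ) : Prop :=
  ∀ (i : Fin N) (e : Fin (i.1 + 1) → ℕ), StrictMono e → (∀ k, e k ∈ S.V) →
    S.lab i e ∈ C i

/-- `S` is a substructure of `T`. -/
def URStr.Sub (S T : URStr N Λ) : Prop :=
  S.V ⊆ T.V ∧ ∀ (i : Fin N) (e : Fin (i.1 + 1) → ℕ), StrictMono e →
    (∀ k, e k ∈ S.V) → S.lab i e = T.lab i e

/-- An embedding of `S` into `T` (order-preserving representation). -/
def URStr.Emb (f : ℕ → ℕ) (S T : URStr N Λ) : Prop :=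
  StrictMonoOn f ↑S.V ∧ (∀ x ∈ S.V, f x ∈ T.V) ∧
  ∀ (i : Fin N) (e : Fin (i.1 + 1) → ℕ), StrictMono e → (∀ k, e k ∈ S.V) →
    T.lab i (f ∘ e) = S.lab i e

/-- The structures `X` (at `x` over `W`) and `Y` (at `y` over `W`) agree: the
labels of tuples from `W ∪ {x}` match those of the corresponding tuples from
`W ∪ {y}` under `x ↦ y`. -/
def TypeMatch (X : URStr N Λ) (x : ℕ) (Y : URStr N Λ) (y : ℕ) (W : Finset ℕ) : Prop :=
  ∀ (i : Fin N) (e : Fin (i.1 + 1) → ℕ), StrictMono e → (∀ k, e k ∈ W ∨ e k = x) →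
    X.lab i e = Y.lab i (fun k => if e k = x then y else e k)


open Classical in
private lemma subst1_mono' {m : ℕ} {e : Fin m → ℕ} (he : StrictMono e)
    {S : Set ℕ} {p p' : ℕ} (hSp : ∀ a ∈ S, a < p) (hSp' : ∀ a ∈ S, a < p')
    (hmem : ∀ k, e k ∈ S ∨ e k = p) :
    StrictMono (fun k => if e k = p then p' else e k) := by
  have hm : ∀ k, (e k < p ∧ e k < p') ∨ e k = p := by
    intro k; rcases hmem k with h | h
    · exact Or.inl ⟨hSp _ h, hSp' _ h⟩
    · exact Or.inr h
  intro j k hjk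
  have h := he hjk
  have h1 := hm j; have h2 := hm k
  simp only
  split_ifs <;> omega

open Classical in
private lemma subst2_mono' {m : ℕ} {e : Fin m → ℕ} (he : StrictMono e)
    {S : Set ℕ} {p q p' q' : ℕ} (hSp : ∀ a ∈ S, a < p) (hSp' : ∀ a ∈ S, a < p')
    (hpq : p < q) (hpq' : p' < q')
    (hmem : ∀ k, e k ∈ S ∨ e k = p ∨ e k = q) :
    StrictMono (fun k => if e k = p then p' else if e k = q then q' else e k) := by
  have hm : ∀ k, (e k < p ∧ e k < p') ∨ e k = p ∨ e k = q := by
    intro k; rcases hmem k with h | h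
    · exact Or.inl ⟨hSp _ h, hSp' _ h⟩
    · exact Or.inr h
  intro j k hjk
  have h := he hjk
  have h1 := hm j; have h2 := hm k
  simp only
  split_ifs <;> omega

theorem unrestricted_class_is_fraisse_with_disjoint_amalgamation_and_SDAP
    (C : ∀ i : Fin N, Set (Λ i))
    -- the universal constraint sets are closed under isomorphism (relabeling):
    (act : ∀ i : Fin N, Equiv.Perm (Fin (i.1 + 1)) → Λ i → Λ i)
    (hact_one : ∀ i x, act i 1 x = x)
    (hact_mul : ∀ i π σ x, act i (π * σ) x = act i π (act i σ x))
    (hC : ∀ i π x, x ∈ C i → act i π x ∈ C i)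
    (hCne : ∀ i, (C i).Nonempty) :
    -- `U_C` is hereditary:
    (∀ S T : URStr N Λ, InUC C T → S.Sub T → InUC C S) ∧
    -- has the joint embedding property:
    (∀ A B : URStr N Λ, InUC C A → InUC C B →
      ∃ (D : URStr N Λ) (f g : ℕ → ℕ), InUC C D ∧
        URStr.Emb f A D ∧ URStr.Emb g B D) ∧
    -- has disjoint amalgamation:
    (∀ A B B' : URStr N Λ, InUC C A → InUC C B → InUC C B' →
      A.Sub B → A.Sub B' → (↑B.V ∩ ↑B'.V : Set ℕ) = ↑A.V →
      ∃ D : URStr N Λ, InUC C D ∧ B.Sub D ∧ B'.Sub D ∧ D.V = B.V ∪ B'.V) ∧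
    -- and satisfies SDAP:
    (∀ A Cst : URStr N Λ, InUC C A → InUC C Cst → A.Sub Cst →
      ∀ v w : ℕ, v ∉ A.V → w ∉ A.V → v < w → (∀ a ∈ A.V, a < v) →
      (↑Cst.V : Set ℕ) = ↑A.V ∪ {v, w} →
      ∃ (A' C' : URStr N Λ) (v' w' : ℕ), InUC C A' ∧ InUC C C' ∧
        A.Sub A' ∧ A'.Sub C' ∧ v' ∉ A'.V ∧ w' ∉ A'.V ∧ v' < w' ∧
        (∀ a ∈ A'.V, a < v') ∧ (↑C'.V : Set ℕ) = ↑A'.V ∪ {v', w'} ∧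
        -- `C'` is a disjoint amalgam of `A'` and `C` over `A`:
        (∀ (i : Fin N) (e : Fin (i.1 + 1) → ℕ), StrictMono e →
          (∀ k, e k ∈ A.V ∨ e k = v ∨ e k = w) →
          Cst.lab i e = C'.lab i
            (fun k => if e k = v then v' else if e k = w then w' else e k)) ∧
        -- such that for all `B ⊇ A'` in `U_C`:
        (∀ B : URStr N Λ, InUC C B → A'.Sub B →
         -- all 1-types `σ`, `τ` over `B`, presented by one-point extensions
         -- `Bσ = B ∪ {vσ}`, `Bτ = B ∪ {wτ}` in `U_C`:
         ∀ (Bσ Bτ : URStr N Λ) (vσ wτ : ℕ), InUC C Bσ → InUC C Bτ →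
           B.Sub Bσ → B.Sub Bτ → vσ ∉ B.V → wτ ∉ B.V →
           (∀ b ∈ B.V, b < vσ) → (∀ b ∈ B.V, b < wτ) →
           (↑Bσ.V : Set ℕ) = insert vσ ↑B.V → (↑Bτ.V : Set ℕ) = insert wτ ↑B.V →
           -- with `σ ↾ A' = tp(v'/A')` and `τ ↾ A' = tp(w'/A')`:
           TypeMatch C' v' Bσ vσ A'.V → TypeMatch C' w' Bτ wτ A'.V →
           -- for any one-point extension `D` of `B` in `U_C` realizing `σ`:
           ∀ (D : URStr N Λ) (v'' : ℕ), InUC C D → B.Sub D → v'' ∉ B.V →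
             (∀ b ∈ B.V, b < v'') → (↑D.V : Set ℕ) = insert v'' ↑B.V →
             TypeMatch Bσ vσ D v'' B.V →
           -- there is a one-point extension `E` of `D` in `U_C` realizing `τ`
           ∃ (E : URStr N Λ) (w'' : ℕ), InUC C E ∧ D.Sub E ∧ w'' ∉ D.V ∧
             v'' < w'' ∧ (↑E.V : Set ℕ) = insert w'' ↑D.V ∧
             TypeMatch Bτ wτ E w'' B.V ∧
             -- with `E ↾ (A ∪ {v'', w''}) ≅ Cst`:
             (∀ (i : Fin N) (e : Fin (i.1 + 1) → ℕ), StrictMono e →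
               (∀ k, e k ∈ A.V ∨ e k = v ∨ e k = w) →
               Cst.lab i e = E.lab i
                 (fun k => if e k = v then v'' else if e k = w then w'' else e k)))) := by
  classical
  refine ⟨?_, ?_, ?_, ?_⟩
  -- hereditary
  · intro S T hT hST i e he hin
    rw [hST.2 i e he hin]
    exact hT i e he fun k => hST.1 (hin k)
  -- JEP
  · intro A B hA hB
    set M := A.V.sup id + 1 with hMdef
    have hM : ∀ a ∈ A.V, a < M := fun a ha =>
      Nat.lt_succ_of_le (Finset.le_sup (f := id) ha)
    refine ⟨⟨A.V ∪ B.V.image (· + M),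
      fun i e => if ∀ k, M ≤ e k then B.lab i (fun k => e k - M)
        else if ∀ k, e k ∈ A.V then A.lab i e else (hCne i).some⟩,
      id, (· + M), ?_, ?_, ?_⟩
    · intro i e he hin
      dsimp only at hin ⊢
      by_cases h1 : ∀ k, M ≤ e k
      · rw [if_pos h1]
        refine hB i _ (fun j k hjk => ?_) (fun k => ?_)
        · exact Nat.sub_lt_sub_right (h1 j) (he hjk)
        · rcases Finset.mem_union.1 (hin k) with h | h
          · exact absurd (h1 k) (not_le.2 (hM _ h))
          · rcases Finset.mem_image.1 h with ⟨b, hb, hbe⟩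
            have hbe' : e k - M = b := by omega
            rwa [hbe']
      · rw [if_neg h1]
        by_cases h2 : ∀ k, e k ∈ A.V
        · rw [if_pos h2]; exact hA i e he h2
        · rw [if_neg h2]; exact (hCne i).some_mem
    · refine ⟨fun x _ y _ h => h, fun x hx => Finset.mem_union_left _ hx, ?_⟩
      intro i e he hin
      dsimp only
      simp only [Function.id_comp]
      rw [if_neg (fun h => absurd (h 0) (not_le.2 (hM _ (hin 0)))), if_pos hin]
    · refine ⟨fun x _ y _ h => Nat.add_lt_add_right h M,
        fun x hx => Finset.mem_union_right _ (Finset.mem_image.2 ⟨x, hx, rfl⟩), ?_⟩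
      intro i e he hin
      dsimp only
      simp only [Function.comp]
      rw [if_pos (fun k => Nat.le_add_left M (e k))]
      congr 1
      funext k
      omega
  -- disjoint amalgamation
  · intro A B B' hA hB hB' hAB hAB' hInt
    have hmemA : ∀ x, x ∈ B.V → x ∈ B'.V → x ∈ A.V := by
      intro x h1 h2
      have hx : x ∈ (↑B.V ∩ ↑B'.V : Set ℕ) := ⟨h1, h2⟩
      rw [hInt] at hx
      simpa using hx
    refine ⟨⟨B.V ∪ B'.V, fun i e =>
      if ∀ k, e k ∈ B.V then B.lab i e
      else if ∀ k, e k ∈ B'.V then B'.lab i e else (hCne i).some⟩, ?_, ?_, ?_, rfl⟩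
    · intro i e he hin
      dsimp only
      by_cases h1 : ∀ k, e k ∈ B.V
      · rw [if_pos h1]; exact hB i e he h1
      · rw [if_neg h1]
        by_cases h2 : ∀ k, e k ∈ B'.V
        · rw [if_pos h2]; exact hB' i e he h2
        · rw [if_neg h2]; exact (hCne i).some_mem
    · refine ⟨Finset.subset_union_left, ?_⟩
      intro i e he hin
      dsimp only
      rw [if_pos hin]
    · refine ⟨Finset.subset_union_right, ?_⟩
      intro i e he hin
      dsimp only
      by_cases h1 : ∀ k, e k ∈ B.V
      · rw [if_pos h1]
        have hinA : ∀ k, e k ∈ A.V := fun k => hmemA _ (h1 k) (hin k)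
        rw [← hAB.2 i e he hinA, ← hAB'.2 i e he hinA]
      · rw [if_neg h1, if_pos hin]
  -- SDAP
  ·
    intro A Cst hAUC hCstUC hACst v w hv hw hvw hAv hCstV
    refine ⟨A, Cst, v, w, hAUC, hCstUC, ⟨Finset.Subset.refl _, fun _ _ _ _ => rfl⟩, hACst,
      hv, hw, hvw, hAv, hCstV, ?_, ?_⟩
    · intro i e he hin
      congr 1
      funext k
      split_ifs <;> omega
    · intro B hBUC hAB Bσ Bτ vσ wτ hBσUC hBτUC hBBσ hBBτ hvσB hwτB hBvσ hBwτ hBσV hBτV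
        hTMσ hTMτ D v'' hDUC hBD hv''B hBv'' hDV hσD
      -- membership characterizations
      have hD' : ∀ x, x ∈ D.V ↔ x = v'' ∨ x ∈ B.V := by
        intro x; have hx := Set.ext_iff.1 hDV x; simpa using hx
      have hBτ' : ∀ x, x ∈ Bτ.V ↔ x = wτ ∨ x ∈ B.V := by
        intro x; have hx := Set.ext_iff.1 hBτV x; simpa using hx
      have hCst' : ∀ x, x ∈ Cst.V ↔ x ∈ A.V ∨ x = v ∨ x = w := by
        intro x; have hx := Set.ext_iff.1 hCstV x; simp at hx; tauto
      have hAv'' : ∀ a ∈ A.V, a < v'' := fun a ha => hBv'' a (hAB.1 ha)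
      have hw''D : v'' + 1 ∉ D.V := by
        intro h
        rcases (hD' _).1 h with h | h
        · omega
        · have := hBv'' _ h; omega
      refine ⟨⟨insert (v'' + 1) D.V, fun i g =>
        if ∀ k, g k ≠ v'' + 1 then D.lab i g
        else if ∀ k, g k ∈ B.V ∨ g k = v'' + 1 then
          Bτ.lab i (fun k => if g k = v'' + 1 then wτ else g k)
        else if ∀ k, g k ∈ A.V ∨ g k = v'' ∨ g k = v'' + 1 then
          Cst.lab i (fun k => if g k = v'' then v else if g k = v'' + 1 then w else g k)
        else (hCne i).some⟩, v'' + 1, ?_, ?_, hw''D, Nat.lt_succ_self _, ?_, ?_, ?_⟩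
      -- InUC E
      · intro i g hg hin
        dsimp only at hin ⊢
        by_cases h1 : ∀ k, g k ≠ v'' + 1
        · rw [if_pos h1]
          refine hDUC i g hg fun k => ?_
          rcases Finset.mem_insert.1 (hin k) with h | h
          · exact absurd h (h1 k)
          · exact h
        · rw [if_neg h1]
          by_cases h2 : ∀ k, g k ∈ B.V ∨ g k = v'' + 1
          · rw [if_pos h2]
            refine hBτUC i _ (subst1_mono' hg (S := ↑B.V)
              (fun a ha => by have := hBv'' a ha; omega) (fun a ha => hBwτ a ha)
              (fun k => h2 k)) fun k => ?_
            rcases h2 k with h | h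
            · rw [if_neg (by have := hBv'' _ h; omega)]
              exact (hBτ' _).2 (Or.inr h)
            · rw [if_pos h]
              exact (hBτ' _).2 (Or.inl rfl)
          · rw [if_neg h2]
            by_cases h3 : ∀ k, g k ∈ A.V ∨ g k = v'' ∨ g k = v'' + 1
            · rw [if_pos h3]
              refine hCstUC i _ (subst2_mono' hg (S := ↑A.V)
                (fun a ha => hAv'' a ha) (fun a ha => hAv a ha) (Nat.lt_succ_self _) hvw
                (fun k => h3 k)) fun k => ?_
              rcases h3 k with h | h | h
              · have := hAv'' _ h
                rw [if_neg (by omega), if_neg (by omega)]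
                exact (hCst' _).2 (Or.inl h)
              · rw [if_pos h]
                exact (hCst' _).2 (Or.inr (Or.inl rfl))
              · rw [if_neg (by omega), if_pos h]
                exact (hCst' _).2 (Or.inr (Or.inr rfl))
            · rw [if_neg h3]
              exact (hCne i).some_mem
      -- D.Sub E
      · refine ⟨Finset.subset_insert _ _, ?_⟩
        intro i e he hin
        dsimp only
        have h1 : ∀ k, e k ≠ v'' + 1 := by
          intro k hk
          exact hw''D (hk ▸ hin k)
        rw [if_pos h1]
      -- E.V
      · exact Finset.coe_insert _ _
      -- TypeMatch Bτ wτ E (v''+1) B.V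
      · intro i e he hin
        dsimp only
        by_cases hex : ∃ k, e k = wτ
        · obtain ⟨k0, hk0⟩ := hex
          have hne1 : ¬∀ k, (if e k = wτ then v'' + 1 else e k) ≠ v'' + 1 := by
            intro h; exact h k0 (by rw [if_pos hk0])
          have h2 : ∀ k, (if e k = wτ then v'' + 1 else e k) ∈ B.V ∨
              (if e k = wτ then v'' + 1 else e k) = v'' + 1 := by
            intro k
            by_cases h : e k = wτ
            · rw [if_pos h]; exact Or.inr rfl
            · rw [if_neg h]; exact Or.inl ((hin k).resolve_right h)
          rw [if_neg hne1, if_pos h2]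
          congr 1
          funext k
          have hk : e k < v'' ∨ e k = wτ := (hin k).imp (hBv'' _) id
          split_ifs <;> omega
        · push_neg at hex
          have hinB : ∀ k, e k ∈ B.V := fun k => (hin k).resolve_right (hex k)
          have hg : (fun k => if e k = wτ then v'' + 1 else e k) = e := by
            funext k; rw [if_neg (hex k)]
          rw [if_pos (show ∀ k, (if e k = wτ then v'' + 1 else e k) ≠ v'' + 1 from fun k h => by rw [if_neg (hex k)] at h; have := hBv'' _ (hinB k); omega), hg]
          rw [← hBD.2 i e he hinB, ← hBBτ.2 i e he hinB]
      -- iso with Cst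
      · intro i e he hin
        dsimp only
        have hval : ∀ k, (e k ∈ A.V ∧ e k < v ∧ e k < v'') ∨ e k = v ∨ e k = w := by
          intro k
          rcases hin k with h | h
          · exact Or.inl ⟨h, hAv _ h, hAv'' _ h⟩
          · exact Or.inr h
        by_cases hexw : ∃ k, e k = w
        · obtain ⟨k0, hk0⟩ := hexw
          have hne1 : ¬∀ k, (if e k = v then v'' else if e k = w then v'' + 1 else e k) ≠ v'' + 1 := by
            intro h
            exact h k0 (by rw [if_neg (by omega), if_pos hk0])
          rw [if_neg hne1]
          by_cases hexv : ∃ k, e k = v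
          · obtain ⟨k1, hk1⟩ := hexv
            have hne2 : ¬∀ k, (if e k = v then v'' else if e k = w then v'' + 1 else e k) ∈ B.V ∨
                (if e k = v then v'' else if e k = w then v'' + 1 else e k) = v'' + 1 := by
              intro h
              rcases h k1 with h | h
              · rw [if_pos hk1] at h; exact hv''B h
              · rw [if_pos hk1] at h; omega
            have h3 : ∀ k, (if e k = v then v'' else if e k = w then v'' + 1 else e k) ∈ A.V ∨
                (if e k = v then v'' else if e k = w then v'' + 1 else e k) = v'' ∨
                (if e k = v then v'' else if e k = w then v'' + 1 else e k) = v'' + 1 := by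
              intro k
              rcases hval k with ⟨h, h1, h2⟩ | h | h
              · rw [if_neg (by omega), if_neg (by omega)]; exact Or.inl h
              · rw [if_pos h]; exact Or.inr (Or.inl rfl)
              · rw [if_neg (by omega), if_pos h]; exact Or.inr (Or.inr rfl)
            rw [if_neg hne2, if_pos h3]
            congr 1
            funext k
            rcases hval k with ⟨h, h1, h2⟩ | h | h <;> split_ifs <;> omega
          · push_neg at hexv
            have h2 : ∀ k, (if e k = v then v'' else if e k = w then v'' + 1 else e k) ∈ B.V ∨
                (if e k = v then v'' else if e k = w then v'' + 1 else e k) = v'' + 1 := by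
              intro k
              rcases hval k with ⟨h, h1, h2⟩ | h | h
              · rw [if_neg (by omega), if_neg (by omega)]; exact Or.inl (hAB.1 h)
              · exact absurd h (hexv k)
              · rw [if_neg (by omega), if_pos h]; exact Or.inr rfl
            rw [if_pos h2]
            have hmemτ : ∀ k, e k ∈ A.V ∨ e k = w := by
              intro k
              rcases hin k with h | h
              · exact Or.inl h
              · exact Or.inr (h.resolve_left (hexv k))
            rw [hTMτ i e he hmemτ]
            congr 1
            funext k
            rcases hval k with ⟨h, h1, h2⟩ | h | h
            · split_ifs <;> omega
            · exact absurd h (hexv k)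
            · split_ifs <;> omega
        · push_neg at hexw
          have h1 : ∀ k, (if e k = v then v'' else if e k = w then v'' + 1 else e k) ≠ v'' + 1 := by
            intro k
            rcases hval k with ⟨h, h1, h2⟩ | h | h
            · rw [if_neg (by omega), if_neg (by omega)]; omega
            · rw [if_pos h]; omega
            · exact absurd h (hexw k)
          rw [if_pos h1]
          have hmemσ : ∀ k, e k ∈ A.V ∨ e k = v := by
            intro k
            rcases hin k with h | h
            · exact Or.inl h
            · exact Or.inr (h.resolve_right (hexw k))
          have he₂ : StrictMono (fun k => if e k = v then vσ else e k) :=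
            subst1_mono' he (S := ↑A.V) (fun a ha => hAv a ha)
              (fun a ha => hBvσ a (hAB.1 ha)) (fun k => hmemσ k)
          have hmem₂ : ∀ k, (if e k = v then vσ else e k) ∈ B.V ∨
              (if e k = v then vσ else e k) = vσ := by
            intro k
            rcases hmemσ k with h | h
            · rw [if_neg (by have := hAv _ h; omega)]; exact Or.inl (hAB.1 h)
            · rw [if_pos h]; exact Or.inr rfl
          have step2 := hσD i _ he₂ hmem₂
          rw [hTMσ i e he hmemσ, step2]
          congr 1
          funext k
          rcases hval k with ⟨h, h1, h2⟩ | h | h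
          · have h4 : e k < vσ := hBvσ _ (hAB.1 h)
            split_ifs <;> omega
          · split_ifs <;> omega
          · exact absurd h (hexw k)
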